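/- Let T_obs, T_1, T_2 be independent exponential random variables with rates 1, λ_1, λ_2 > 0 respectively, and set X_i = 1 if T_i ≤ T_obs and X_i = 0 otherwise (i = 1, 2). Then P(X_1=0, X_2=0) = 1/(1 + λ_1 + λ_2), P(X_1=1, X_2=0) = λ_1 / ((1 + λ_1 + λ_2)(1 + λ_2)), P(X_1=0, X_2=1) = λ_2 / ((1 + λ_1 + λ_2)(1 + λ_1)), and P(X_1=1, X_2=1) = [λ_1 λ_2 / (1 + λ_1 + λ_2)] · [1/(1 + λ_1) + 1/(1 + λ_2)]. -/

import Mathlib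

namespace TimexAux

open MeasureTheory ProbabilityTheory Real Set Filter
open scoped ENNReal

lemma iIndepFun_congr {Ω : Type*} [MeasurableSpace Ω] {P : Measure Ω}
    [IsProbabilityMeasure P]
    {ι : Type*} {β : ι → Type*} [m : ∀ i, MeasurableSpace (β i)]
    {f g : ∀ i, Ω → β i} (hf : iIndepFun f P) (h : ∀ i, f i =ᵐ[P] g i) :
    iIndepFun g P := by
  rw [iIndepFun_iff_measure_inter_preimage_eq_mul] at hf ⊢
  intro S sets hsets
  have hae : ∀ᵐ ω ∂P, ∀ i ∈ S, f i ω = g i ω :=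
    (Filter.eventually_all_finset S).2 fun i _ => h i
  have h1 : P (⋂ i ∈ S, g i ⁻¹' sets i) = P (⋂ i ∈ S, f i ⁻¹' sets i) := by
    apply measure_congr
    filter_upwards [hae] with ω hω
    have : (ω ∈ ⋂ i ∈ S, g i ⁻¹' sets i) ↔ (ω ∈ ⋂ i ∈ S, f i ⁻¹' sets i) := by
      simp only [Set.mem_iInter, Set.mem_preimage]
      exact ⟨fun hm i hi => by rw [hω i hi]; exact hm i hi,
             fun hm i hi => by rw [← hω i hi]; exact hm i hi⟩
    exact eq_iff_iff.2 this
  have h2 : ∀ i ∈ S, P (g i ⁻¹' sets i) = P (f i ⁻¹' sets i) := by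
    intro i hi
    apply measure_congr
    filter_upwards [h i] with ω hω
    exact eq_iff_iff.2 (show g i ω ∈ sets i ↔ f i ω ∈ sets i by rw [hω])
  rw [h1, hf S hsets]
  exact (Finset.prod_congr rfl h2).symm

/-- joint law is the triple product measure -/
lemma joint_map
    {Ω : Type*} [MeasurableSpace Ω] (P : Measure Ω) [IsProbabilityMeasure P]
    (lam1 lam2 : ℝ) (hlam1 : 0 < lam1) (hlam2 : 0 < lam2)
    (T1 T2 Tobs : Ω → ℝ)
    (hT1 : Measure.map T1 P = expMeasure lam1)
    (hT2 : Measure.map T2 P = expMeasure lam2)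
    (hTobs : Measure.map Tobs P = expMeasure 1)
    (hindep : iIndepFun ![Tobs, T1, T2] P) :
    ∀ s : Set (ℝ × ℝ × ℝ), MeasurableSet s →
      P ((fun ω => (Tobs ω, (T1 ω, T2 ω))) ⁻¹' s)
        = ((expMeasure 1).prod ((expMeasure lam1).prod (expMeasure lam2))) s := by
  haveI h1p : IsProbabilityMeasure (expMeasure lam1) := isProbabilityMeasure_expMeasure hlam1
  haveI h2p : IsProbabilityMeasure (expMeasure lam2) := isProbabilityMeasure_expMeasure hlam2
  haveI h0p : IsProbabilityMeasure (expMeasure 1) := isProbabilityMeasure_expMeasure one_pos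
  have hT1m : AEMeasurable T1 P := by
    by_contra h
    rw [Measure.map_of_not_aemeasurable h] at hT1
    exact (IsProbabilityMeasure.ne_zero (expMeasure lam1)) hT1.symm
  have hT2m : AEMeasurable T2 P := by
    by_contra h
    rw [Measure.map_of_not_aemeasurable h] at hT2
    exact (IsProbabilityMeasure.ne_zero (expMeasure lam2)) hT2.symm
  have hTom : AEMeasurable Tobs P := by
    by_contra h
    rw [Measure.map_of_not_aemeasurable h] at hTobs
    exact (IsProbabilityMeasure.ne_zero (expMeasure 1)) hTobs.symm
  set T1' : Ω → ℝ := hT1m.mk T1 with hT1'def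
  set T2' : Ω → ℝ := hT2m.mk T2 with hT2'def
  set To' : Ω → ℝ := hTom.mk Tobs with hTo'def
  have m1 : Measurable T1' := hT1m.measurable_mk
  have m2 : Measurable T2' := hT2m.measurable_mk
  have m0 : Measurable To' := hTom.measurable_mk
  have hindep' : iIndepFun ![To', T1', T2'] P := by
    refine iIndepFun_congr hindep fun i => ?_
    fin_cases i <;>
      simp only [Matrix.cons_val_zero, Matrix.cons_val_one, Matrix.head_cons,
        Matrix.cons_val_two, Matrix.tail_cons]
    · exact hTom.ae_eq_mk
    · exact hT1m.ae_eq_mk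
    · exact hT2m.ae_eq_mk
  have hmeasf : ∀ i, Measurable (![To', T1', T2'] i) := by
    intro i
    fin_cases i <;>
      simp only [Matrix.cons_val_zero, Matrix.cons_val_one, Matrix.head_cons,
        Matrix.cons_val_two, Matrix.tail_cons]
    exacts [m0, m1, m2]
  have h12 : IndepFun T1' T2' P := by
    have := hindep'.indepFun (i := 1) (j := 2) (by decide)
    simpa only [Matrix.cons_val_one, Matrix.head_cons, Matrix.cons_val_two,
      Matrix.tail_cons, Matrix.cons_val_zero] using this
  have hIp : IndepFun (fun ω => (T1' ω, T2' ω)) To' P := by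
    have := hindep'.indepFun_prodMk hmeasf 1 2 0 (by decide) (by decide)
    simpa only [Matrix.cons_val_one, Matrix.head_cons, Matrix.cons_val_two,
      Matrix.tail_cons, Matrix.cons_val_zero] using this
  have hm1 : Measure.map T1' P = expMeasure lam1 := by
    rw [← Measure.map_congr hT1m.ae_eq_mk]; exact hT1
  have hm2 : Measure.map T2' P = expMeasure lam2 := by
    rw [← Measure.map_congr hT2m.ae_eq_mk]; exact hT2
  have hm0 : Measure.map To' P = expMeasure 1 := by
    rw [← Measure.map_congr hTom.ae_eq_mk]; exact hTobs
  have hν : Measure.map (fun ω => (T1' ω, T2' ω)) P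
      = (expMeasure lam1).prod (expMeasure lam2) := by
    rw [(indepFun_iff_map_prod_eq_prod_map_map m1.aemeasurable m2.aemeasurable).1 h12,
      hm1, hm2]
  have hjoint : Measure.map (fun ω => (To' ω, (T1' ω, T2' ω))) P
      = (expMeasure 1).prod ((expMeasure lam1).prod (expMeasure lam2)) := by
    rw [(indepFun_iff_map_prod_eq_prod_map_map m0.aemeasurable
        (m1.prodMk m2).aemeasurable).1 hIp.symm, hm0, hν]
  intro s hs
  have hae : (fun ω => (Tobs ω, (T1 ω, T2 ω))) =ᵐ[P] (fun ω => (To' ω, (T1' ω, T2' ω))) := by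
    filter_upwards [hT1m.ae_eq_mk, hT2m.ae_eq_mk, hTom.ae_eq_mk] with ω e1 e2 e0
    simp only [e1, e2, e0]
    rfl
  have h1 : P ((fun ω => (Tobs ω, (T1 ω, T2 ω))) ⁻¹' s)
      = P ((fun ω => (To' ω, (T1' ω, T2' ω))) ⁻¹' s) := by
    apply measure_congr
    filter_upwards [hae] with ω hω
    refine eq_iff_iff.2 ?_
    show (Tobs ω, T1 ω, T2 ω) ∈ s ↔ (To' ω, T1' ω, T2' ω) ∈ s
    rw [hω]
  rw [h1, ← Measure.map_apply ((m0.prodMk (m1.prodMk m2))) hs, hjoint]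

end TimexAux

namespace TimexAux2

open MeasureTheory ProbabilityTheory Real Set Filter TimexAux
open scoped ENNReal

lemma expMeasure_eq (r : ℝ) : expMeasure r = volume.withDensity (exponentialPDF r) := rfl

lemma expMeasure_Iic {r : ℝ} (hr : 0 < r) {t : ℝ} (ht : 0 ≤ t) :
    expMeasure r (Iic t) = ENNReal.ofReal (1 - rexp (-(r * t))) := by
  rw [expMeasure_eq, withDensity_apply _ measurableSet_Iic,
    lintegral_exponentialPDF_eq_antiDeriv hr t, if_pos ht]

lemma expMeasure_Ioi {r : ℝ} (hr : 0 < r) {t : ℝ} (ht : 0 ≤ t) :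
    expMeasure r (Ioi t) = ENNReal.ofReal (rexp (-(r * t))) := by
  haveI := isProbabilityMeasure_expMeasure hr
  have h1 : expMeasure r (Ioi t) = 1 - expMeasure r (Iic t) := by
    rw [← compl_Iic]
    exact prob_compl_eq_one_sub measurableSet_Iic
  have hle : (0:ℝ) ≤ 1 - rexp (-(r * t)) := by
    have : rexp (-(r * t)) ≤ 1 := exp_le_one_iff.2 (by nlinarith)
    linarith
  rw [h1, expMeasure_Iic hr ht, ← ENNReal.ofReal_one, ← ENNReal.ofReal_sub _ hle]
  norm_num

lemma lint_exp {c : ℝ} (hc : 0 < c) :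
    ∫⁻ t in Ioi (0:ℝ), ENNReal.ofReal (rexp (-(c * t))) = ENNReal.ofReal (1 / c) := by
  rw [← ofReal_integral_eq_lintegral_ofReal]
  · congr 1
    have h := integral_comp_mul_left_Ioi (fun x => rexp (-x)) 0 hc
    simp only [mul_zero] at h
    calc ∫ t in Ioi (0:ℝ), rexp (-(c * t)) = c⁻¹ • ∫ x in Ioi (0:ℝ), rexp (-x) := h
    _ = 1 / c := by rw [integral_exp_neg_Ioi_zero, smul_eq_mul, mul_one, one_div]
  · have := exp_neg_integrableOn_Ioi 0 hc
    have h' : IntegrableOn (fun t => rexp (-(c * t))) (Ioi (0:ℝ)) := by simpa [neg_mul] using this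
    exact h'
  · exact ae_of_all _ fun x => (exp_pos _).le

lemma meas_exp (c : ℝ) : Measurable fun t : ℝ => ENNReal.ofReal (rexp (-(c * t))) :=
  (Real.measurable_exp.comp ((measurable_id.const_mul c).neg)).ennreal_ofReal

lemma lint_expMeasure (G : ℝ → ℝ≥0∞) :
    ∫⁻ t, G t ∂(expMeasure 1) = ∫⁻ t in Ioi (0:ℝ), G t * ENNReal.ofReal (rexp (-t)) := by
  have hpdf : Measurable (exponentialPDF 1) := by
    unfold exponentialPDF
    exact (measurable_exponentialPDFReal 1).ennreal_ofReal
  have hfin : ∀ᵐ x ∂(volume : Measure ℝ), exponentialPDF 1 x < ⊤ :=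
    ae_of_all _ fun x => by
      rw [exponentialPDF]; exact ENNReal.ofReal_lt_top
  rw [expMeasure_eq, lintegral_withDensity_eq_lintegral_mul_non_measurable _ hpdf hfin]
  have hsplit := lintegral_add_compl (μ := (volume : Measure ℝ))
    (fun t => exponentialPDF 1 t * G t) (measurableSet_Ioi (a := (0:ℝ)))
  rw [show (exponentialPDF 1 * G) = (fun t => exponentialPDF 1 t * G t) from rfl,
    ← hsplit, compl_Ioi]
  have hz : ∫⁻ t in Iic (0:ℝ), exponentialPDF 1 t * G t = 0 := by
    rw [setLIntegral_congr Iio_ae_eq_Iic.symm]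
    rw [setLIntegral_congr_fun measurableSet_Iio
      (fun a (ha : a < 0) => by rw [exponentialPDF_of_neg ha, zero_mul])]
    simp
  rw [hz, add_zero]
  refine setLIntegral_congr_fun measurableSet_Ioi (fun a (ha : 0 < a) => ?_)
  rw [exponentialPDF_of_nonneg ha.le, mul_comm]
  norm_num

/-- The generic computation: the triple product measure of a "rectangle in the last
two coordinates depending on the first" set. -/
lemma mu3_eq (lam1 lam2 : ℝ) (hlam1 : 0 < lam1) (hlam2 : 0 < lam2)
    (S : Set (ℝ × ℝ × ℝ)) (hS : MeasurableSet S)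
    (A B : ℝ → Set ℝ) (hAB : ∀ t, Prod.mk t ⁻¹' S = A t ×ˢ B t) :
    ((expMeasure 1).prod ((expMeasure lam1).prod (expMeasure lam2))) S
      = ∫⁻ t in Ioi (0:ℝ),
          (expMeasure lam1 (A t) * expMeasure lam2 (B t)) * ENNReal.ofReal (rexp (-t)) := by
  haveI : IsProbabilityMeasure (expMeasure lam1) := isProbabilityMeasure_expMeasure hlam1
  haveI : IsProbabilityMeasure (expMeasure lam2) := isProbabilityMeasure_expMeasure hlam2
  rw [Measure.prod_apply hS]
  simp_rw [hAB, Measure.prod_prod]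
  exact lint_expMeasure _

end TimexAux2



open MeasureTheory ProbabilityTheory Finset


/-- the two-gene TiMEx null model with `λ_obs = 1`: for independent
exponentials `T_obs ~ Exp(1)`, `T_1 ~ Exp(λ_1)`, `T_2 ~ Exp(λ_2)` and alteration
indicators `X_i = 1 ↔ T_i ≤ T_obs`, the four genotype probabilities are
`P(0,0) = 1/(1+λ_1+λ_2)`, `P(1,0) = λ_1/((1+λ_1+λ_2)(1+λ_2))`,
`P(0,1) = λ_2/((1+λ_1+λ_2)(1+λ_1))`, and
`P(1,1) = [λ_1 λ_2/(1+λ_1+λ_2)]·[1/(1+λ_1) + 1/(1+λ_2)]`. -/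
theorem timex_two_gene_null_genotype_probs
    {Ω : Type*} [MeasurableSpace Ω] (P : Measure Ω) [IsProbabilityMeasure P]
    (lam1 lam2 : ℝ) (hlam1 : 0 < lam1) (hlam2 : 0 < lam2)
    (T1 T2 Tobs : Ω → ℝ)
    (hT1 : Measure.map T1 P = expMeasure lam1)
    (hT2 : Measure.map T2 P = expMeasure lam2)
    (hTobs : Measure.map Tobs P = expMeasure 1)
    (hindep : iIndepFun ![Tobs, T1, T2] P) :
    (P {ω | ¬ T1 ω ≤ Tobs ω ∧ ¬ T2 ω ≤ Tobs ω}).toReal = 1 / (1 + lam1 + lam2) ∧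
    (P {ω | T1 ω ≤ Tobs ω ∧ ¬ T2 ω ≤ Tobs ω}).toReal =
      lam1 / ((1 + lam1 + lam2) * (1 + lam2)) ∧
    (P {ω | ¬ T1 ω ≤ Tobs ω ∧ T2 ω ≤ Tobs ω}).toReal =
      lam2 / ((1 + lam1 + lam2) * (1 + lam1)) ∧
    (P {ω | T1 ω ≤ Tobs ω ∧ T2 ω ≤ Tobs ω}).toReal =
      (lam1 * lam2 / (1 + lam1 + lam2)) * (1 / (1 + lam1) + 1 / (1 + lam2)) := by
  have key := TimexAux.joint_map P lam1 lam2 hlam1 hlam2 T1 T2 Tobs hT1 hT2 hTobs hindep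
  have hSpos : (0:ℝ) < 1 + lam1 + lam2 := by linarith
  have hapos : (0:ℝ) < 1 + lam1 := by linarith
  have hbpos : (0:ℝ) < 1 + lam2 := by linarith
  -- pointwise exponential facts
  have hexpA : ∀ t : ℝ, Real.exp (-((1+lam1) * t))
      = Real.exp (-(lam1 * t)) * Real.exp (-t) := by
    intro t; rw [← Real.exp_add]; congr 1; ring
  have hexpB : ∀ t : ℝ, Real.exp (-((1+lam2) * t))
      = Real.exp (-(lam2 * t)) * Real.exp (-t) := by
    intro t; rw [← Real.exp_add]; congr 1; ring
  have hexpC : ∀ t : ℝ, Real.exp (-((1+lam1+lam2) * t))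
      = Real.exp (-(lam1 * t)) * (Real.exp (-(lam2 * t)) * Real.exp (-t)) := by
    intro t; rw [← Real.exp_add, ← Real.exp_add]; congr 1; ring
  have hle1 : ∀ {c t : ℝ}, 0 < c → 0 < t → Real.exp (-(c * t)) ≤ 1 := by
    intro c t hc ht
    exact Real.exp_le_one_iff.2 (by nlinarith)
  -- measurable sets
  have hS00 : MeasurableSet {p : ℝ × ℝ × ℝ | ¬ p.2.1 ≤ p.1 ∧ ¬ p.2.2 ≤ p.1} := by
    simp only [not_le, Set.setOf_and]
    exact (measurableSet_lt measurable_fst (measurable_fst.comp measurable_snd)).inter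
      (measurableSet_lt measurable_fst (measurable_snd.comp measurable_snd))
  have hS10 : MeasurableSet {p : ℝ × ℝ × ℝ | p.2.1 ≤ p.1 ∧ ¬ p.2.2 ≤ p.1} := by
    simp only [not_le, Set.setOf_and]
    exact (measurableSet_le (measurable_fst.comp measurable_snd) measurable_fst).inter
      (measurableSet_lt measurable_fst (measurable_snd.comp measurable_snd))
  have hS01 : MeasurableSet {p : ℝ × ℝ × ℝ | ¬ p.2.1 ≤ p.1 ∧ p.2.2 ≤ p.1} := by
    simp only [not_le, Set.setOf_and]
    exact (measurableSet_lt measurable_fst (measurable_fst.comp measurable_snd)).inter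
      (measurableSet_le (measurable_snd.comp measurable_snd) measurable_fst)
  have hS11 : MeasurableSet {p : ℝ × ℝ × ℝ | p.2.1 ≤ p.1 ∧ p.2.2 ≤ p.1} := by
    simp only [Set.setOf_and]
    exact (measurableSet_le (measurable_fst.comp measurable_snd) measurable_fst).inter
      (measurableSet_le (measurable_snd.comp measurable_snd) measurable_fst)
  refine ⟨?_, ?_, ?_, ?_⟩
  · -- (0,0)
    have p00 : P {ω | ¬ T1 ω ≤ Tobs ω ∧ ¬ T2 ω ≤ Tobs ω}
        = ENNReal.ofReal (1 / (1 + lam1 + lam2)) := by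
      rw [show {ω | ¬ T1 ω ≤ Tobs ω ∧ ¬ T2 ω ≤ Tobs ω}
          = (fun ω => (Tobs ω, (T1 ω, T2 ω))) ⁻¹'
            {p : ℝ × ℝ × ℝ | ¬ p.2.1 ≤ p.1 ∧ ¬ p.2.2 ≤ p.1} from rfl,
        key _ hS00,
        TimexAux2.mu3_eq lam1 lam2 hlam1 hlam2 _ hS00 (fun t => Set.Ioi t) (fun t => Set.Ioi t)
          (fun t => by ext q; simp [Set.mem_prod, not_le])]
      have hcongr : ∀ t ∈ Set.Ioi (0:ℝ),
          (expMeasure lam1 (Set.Ioi t) * expMeasure lam2 (Set.Ioi t))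
              * ENNReal.ofReal (Real.exp (-t))
            = ENNReal.ofReal (Real.exp (-((1+lam1+lam2) * t))) := by
        intro t ht
        rw [TimexAux2.expMeasure_Ioi hlam1 (le_of_lt ht),
          TimexAux2.expMeasure_Ioi hlam2 (le_of_lt ht),
          ← ENNReal.ofReal_mul (Real.exp_pos _).le,
          ← ENNReal.ofReal_mul (by positivity), hexpC t]
        exact congrArg ENNReal.ofReal (by ring)
      rw [setLIntegral_congr_fun measurableSet_Ioi hcongr,
        TimexAux2.lint_exp hSpos]
    rw [p00, ENNReal.toReal_ofReal (div_nonneg zero_le_one hSpos.le)]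
  · -- (1,0)
    have p10 : P {ω | T1 ω ≤ Tobs ω ∧ ¬ T2 ω ≤ Tobs ω}
        = ENNReal.ofReal (1 / (1 + lam2)) - ENNReal.ofReal (1 / (1 + lam1 + lam2)) := by
      rw [show {ω | T1 ω ≤ Tobs ω ∧ ¬ T2 ω ≤ Tobs ω}
          = (fun ω => (Tobs ω, (T1 ω, T2 ω))) ⁻¹'
            {p : ℝ × ℝ × ℝ | p.2.1 ≤ p.1 ∧ ¬ p.2.2 ≤ p.1} from rfl,
        key _ hS10,
        TimexAux2.mu3_eq lam1 lam2 hlam1 hlam2 _ hS10 (fun t => Set.Iic t) (fun t => Set.Ioi t)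
          (fun t => by ext q; simp [Set.mem_prod, not_le])]
      have hcongr : ∀ t ∈ Set.Ioi (0:ℝ),
          (expMeasure lam1 (Set.Iic t) * expMeasure lam2 (Set.Ioi t))
              * ENNReal.ofReal (Real.exp (-t))
            = ENNReal.ofReal (Real.exp (-((1+lam2) * t)))
              - ENNReal.ofReal (Real.exp (-((1+lam1+lam2) * t))) := by
        intro t ht
        have hx : Real.exp (-(lam1 * t)) ≤ 1 := hle1 hlam1 ht
        rw [TimexAux2.expMeasure_Iic hlam1 (le_of_lt ht),
          TimexAux2.expMeasure_Ioi hlam2 (le_of_lt ht),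
          ← ENNReal.ofReal_mul (by linarith),
          ← ENNReal.ofReal_mul (mul_nonneg (by linarith) (Real.exp_pos _).le),
          ← ENNReal.ofReal_sub _ (Real.exp_pos _).le]
        congr 1
        rw [hexpB t, hexpC t]; ring
      rw [setLIntegral_congr_fun measurableSet_Ioi hcongr,
        lintegral_sub (TimexAux2.meas_exp _)
          (by rw [TimexAux2.lint_exp hSpos]; exact ENNReal.ofReal_ne_top)
          ((ae_restrict_iff' measurableSet_Ioi).2 (ae_of_all _ fun t ht =>
            ENNReal.ofReal_le_ofReal (Real.exp_le_exp.2 (by nlinarith [Set.mem_Ioi.1 ht])))),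
        TimexAux2.lint_exp hbpos, TimexAux2.lint_exp hSpos]
    have hd : (0:ℝ) ≤ 1 / (1 + lam2) - 1 / (1 + lam1 + lam2) := by
      have := one_div_le_one_div_of_le hbpos (show 1 + lam2 ≤ 1 + lam1 + lam2 by linarith)
      linarith
    rw [p10, ← ENNReal.ofReal_sub _ (div_nonneg zero_le_one hSpos.le),
      ENNReal.toReal_ofReal hd, div_sub_div _ _ hbpos.ne' hSpos.ne',
      show (1:ℝ) * (1 + lam1 + lam2) - (1 + lam2) * 1 = lam1 by ring,
      mul_comm (1 + lam2) (1 + lam1 + lam2)]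
  · -- (0,1)
    have p01 : P {ω | ¬ T1 ω ≤ Tobs ω ∧ T2 ω ≤ Tobs ω}
        = ENNReal.ofReal (1 / (1 + lam1)) - ENNReal.ofReal (1 / (1 + lam1 + lam2)) := by
      rw [show {ω | ¬ T1 ω ≤ Tobs ω ∧ T2 ω ≤ Tobs ω}
          = (fun ω => (Tobs ω, (T1 ω, T2 ω))) ⁻¹'
            {p : ℝ × ℝ × ℝ | ¬ p.2.1 ≤ p.1 ∧ p.2.2 ≤ p.1} from rfl,
        key _ hS01,
        TimexAux2.mu3_eq lam1 lam2 hlam1 hlam2 _ hS01 (fun t => Set.Ioi t) (fun t => Set.Iic t)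
          (fun t => by ext q; simp [Set.mem_prod, not_le])]
      have hcongr : ∀ t ∈ Set.Ioi (0:ℝ),
          (expMeasure lam1 (Set.Ioi t) * expMeasure lam2 (Set.Iic t))
              * ENNReal.ofReal (Real.exp (-t))
            = ENNReal.ofReal (Real.exp (-((1+lam1) * t)))
              - ENNReal.ofReal (Real.exp (-((1+lam1+lam2) * t))) := by
        intro t ht
        have hy : Real.exp (-(lam2 * t)) ≤ 1 := hle1 hlam2 ht
        rw [TimexAux2.expMeasure_Ioi hlam1 (le_of_lt ht),
          TimexAux2.expMeasure_Iic hlam2 (le_of_lt ht),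
          ← ENNReal.ofReal_mul (Real.exp_pos _).le,
          ← ENNReal.ofReal_mul (mul_nonneg (Real.exp_pos _).le (by linarith)),
          ← ENNReal.ofReal_sub _ (Real.exp_pos _).le]
        congr 1
        rw [hexpA t, hexpC t]; ring
      rw [setLIntegral_congr_fun measurableSet_Ioi hcongr,
        lintegral_sub (TimexAux2.meas_exp _)
          (by rw [TimexAux2.lint_exp hSpos]; exact ENNReal.ofReal_ne_top)
          ((ae_restrict_iff' measurableSet_Ioi).2 (ae_of_all _ fun t ht =>
            ENNReal.ofReal_le_ofReal (Real.exp_le_exp.2 (by nlinarith [Set.mem_Ioi.1 ht])))),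
        TimexAux2.lint_exp hapos, TimexAux2.lint_exp hSpos]
    have hd : (0:ℝ) ≤ 1 / (1 + lam1) - 1 / (1 + lam1 + lam2) := by
      have := one_div_le_one_div_of_le hapos (show 1 + lam1 ≤ 1 + lam1 + lam2 by linarith)
      linarith
    rw [p01, ← ENNReal.ofReal_sub _ (div_nonneg zero_le_one hSpos.le),
      ENNReal.toReal_ofReal hd, div_sub_div _ _ hapos.ne' hSpos.ne',
      show (1:ℝ) * (1 + lam1 + lam2) - (1 + lam1) * 1 = lam2 by ring,
      mul_comm (1 + lam1) (1 + lam1 + lam2)]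
  · -- (1,1)
    have p11 : P {ω | T1 ω ≤ Tobs ω ∧ T2 ω ≤ Tobs ω}
        = (ENNReal.ofReal (1 / (1:ℝ)) + ENNReal.ofReal (1 / (1 + lam1 + lam2)))
          - (ENNReal.ofReal (1 / (1 + lam1)) + ENNReal.ofReal (1 / (1 + lam2))) := by
      rw [show {ω | T1 ω ≤ Tobs ω ∧ T2 ω ≤ Tobs ω}
          = (fun ω => (Tobs ω, (T1 ω, T2 ω))) ⁻¹'
            {p : ℝ × ℝ × ℝ | p.2.1 ≤ p.1 ∧ p.2.2 ≤ p.1} from rfl,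
        key _ hS11,
        TimexAux2.mu3_eq lam1 lam2 hlam1 hlam2 _ hS11 (fun t => Set.Iic t) (fun t => Set.Iic t)
          (fun t => by ext q; simp [Set.mem_prod, Prod.le_def])]
      have hcongr : ∀ t ∈ Set.Ioi (0:ℝ),
          (expMeasure lam1 (Set.Iic t) * expMeasure lam2 (Set.Iic t))
              * ENNReal.ofReal (Real.exp (-t))
            = (ENNReal.ofReal (Real.exp (-((1:ℝ) * t)))
                + ENNReal.ofReal (Real.exp (-((1+lam1+lam2) * t))))
              - (ENNReal.ofReal (Real.exp (-((1+lam1) * t)))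
                + ENNReal.ofReal (Real.exp (-((1+lam2) * t)))) := by
        intro t ht
        have hx : Real.exp (-(lam1 * t)) ≤ 1 := hle1 hlam1 ht
        have hy : Real.exp (-(lam2 * t)) ≤ 1 := hle1 hlam2 ht
        rw [TimexAux2.expMeasure_Iic hlam1 (le_of_lt ht),
          TimexAux2.expMeasure_Iic hlam2 (le_of_lt ht),
          ← ENNReal.ofReal_mul (by linarith),
          ← ENNReal.ofReal_mul (mul_nonneg (by linarith) (by linarith)),
          ← ENNReal.ofReal_add (Real.exp_pos _).le (Real.exp_pos _).le,
          ← ENNReal.ofReal_add (Real.exp_pos _).le (Real.exp_pos _).le,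
          ← ENNReal.ofReal_sub _ (by positivity)]
        congr 1
        rw [hexpA t, hexpB t, hexpC t, one_mul]; ring
      rw [setLIntegral_congr_fun measurableSet_Ioi hcongr,
        lintegral_sub (g := fun t : ℝ => ENNReal.ofReal (Real.exp (-((1 + lam1) * t))) + ENNReal.ofReal (Real.exp (-((1 + lam2) * t)))) ((TimexAux2.meas_exp _).add (TimexAux2.meas_exp _))
          (by rw [lintegral_add_left (TimexAux2.meas_exp _), TimexAux2.lint_exp hapos,
              TimexAux2.lint_exp hbpos]; exact ENNReal.add_ne_top.2
                ⟨ENNReal.ofReal_ne_top, ENNReal.ofReal_ne_top⟩)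
          ((ae_restrict_iff' measurableSet_Ioi).2 (ae_of_all _ fun t ht => by
            have ht' : 0 < t := Set.mem_Ioi.1 ht
            have hx : Real.exp (-(lam1 * t)) ≤ 1 := hle1 hlam1 ht'
            have hy : Real.exp (-(lam2 * t)) ≤ 1 := hle1 hlam2 ht'
            show ENNReal.ofReal (Real.exp (-((1 + lam1) * t)))
                  + ENNReal.ofReal (Real.exp (-((1 + lam2) * t)))
                ≤ ENNReal.ofReal (Real.exp (-((1:ℝ) * t)))
                  + ENNReal.ofReal (Real.exp (-((1 + lam1 + lam2) * t)))
            rw [← ENNReal.ofReal_add (Real.exp_pos _).le (Real.exp_pos _).le,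
              ← ENNReal.ofReal_add (Real.exp_pos _).le (Real.exp_pos _).le]
            refine ENNReal.ofReal_le_ofReal ?_
            rw [hexpA t, hexpB t, hexpC t, one_mul]
            nlinarith [mul_nonneg (mul_nonneg (sub_nonneg.2 hx) (sub_nonneg.2 hy))
              (Real.exp_pos (-t)).le])),
        lintegral_add_left (TimexAux2.meas_exp _),
        lintegral_add_left (TimexAux2.meas_exp _),
        TimexAux2.lint_exp one_pos, TimexAux2.lint_exp hSpos,
        TimexAux2.lint_exp hapos, TimexAux2.lint_exp hbpos]
    have hkey : 1 / (1:ℝ) + 1 / (1 + lam1 + lam2) - (1 / (1 + lam1) + 1 / (1 + lam2))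
        = lam1 * lam2 / (1 + lam1 + lam2) * (1 / (1 + lam1) + 1 / (1 + lam2)) := by
      field_simp
      ring
    have hn1 : (0:ℝ) ≤ 1 / (1:ℝ) := by norm_num
    have hnS : (0:ℝ) ≤ 1 / (1 + lam1 + lam2) := div_nonneg zero_le_one hSpos.le
    have hna : (0:ℝ) ≤ 1 / (1 + lam1) := div_nonneg zero_le_one hapos.le
    have hnb : (0:ℝ) ≤ 1 / (1 + lam2) := div_nonneg zero_le_one hbpos.le
    have hfin : (0:ℝ) ≤ 1 / (1:ℝ) + 1 / (1 + lam1 + lam2) - (1 / (1 + lam1) + 1 / (1 + lam2)) := by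
      rw [hkey]
      exact mul_nonneg (div_nonneg (mul_nonneg hlam1.le hlam2.le) hSpos.le)
        (add_nonneg hna hnb)
    rw [p11, ← ENNReal.ofReal_add hn1 hnS, ← ENNReal.ofReal_add hna hnb,
      ← ENNReal.ofReal_sub _ (add_nonneg hna hnb),
      ENNReal.toReal_ofReal hfin, hkey]
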